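/- If N is odd, then for every integer k with |k| ≤ ⌊N/2⌋, one has S(⌊N/2⌋ - k) · S(⌊N/2⌋ + k) = N. -/

import Mathlib

open Real Finset

/-- `S N k = ∏_{j=1}^{k} (2 sin(ω j / 2))` with `ω = 2π/N` (so `ω j / 2 = π j / N`),
extended to integer arguments (equal to `1` for `k ≤ 0`). -/
noncomputable def S (N : ℕ) (k : ℤ) : ℝ := ∏ j ∈ Finset.Icc 1 k.toNat, (2 * Real.sin (π * j / N))

lemma abs_one_sub_exp (θ : ℝ) :
    ‖1 - Complex.exp (θ * Complex.I)‖ = 2 * |Real.sin (θ / 2)| := by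
  have h1 : (1 : ℂ) - Complex.exp (θ * Complex.I)
      = ((1 - Real.cos θ : ℝ) : ℂ) + ((-Real.sin θ : ℝ) : ℂ) * Complex.I := by
    rw [Complex.exp_mul_I, ← Complex.ofReal_cos, ← Complex.ofReal_sin]
    push_cast; ring
  rw [h1, Complex.norm_add_mul_I]
  have h2 : (1 - Real.cos θ) ^ 2 + (-Real.sin θ) ^ 2 = (2 * |Real.sin (θ / 2)|) ^ 2 := by
    have hc : Real.cos θ = 1 - 2 * Real.sin (θ / 2) ^ 2 := by
      have h4 : Real.cos (2 * (θ / 2)) = Real.cos θ := by ring_nf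
      nlinarith [Real.cos_two_mul (θ / 2), Real.sin_sq_add_cos_sq (θ / 2)]
    have h5 := Real.sin_sq_add_cos_sq θ
    rw [mul_pow, sq_abs]
    nlinarith
  rw [h2, Real.sqrt_sq (by positivity)]

/-- The classical identity `∏_{j=1}^{N-1} 2 sin(π j / N) = N`. -/
lemma prod_two_sin' (N : ℕ) (hN : 2 ≤ N) :
    ∏ j ∈ Finset.Icc 1 (N - 1), (2 * Real.sin (π * j / N)) = N := by
  obtain ⟨n, rfl⟩ : ∃ n, N = n + 1 := ⟨N - 1, by omega⟩
  have hμ := Complex.isPrimitiveRoot_exp (n + 1) (by omega)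
  have h := hμ.prod_one_sub_pow_eq_order
  have habs := congrArg norm h
  rw [norm_prod] at habs
  have hterm : ∀ k ∈ Finset.range n,
      ‖1 - Complex.exp (2 * π * Complex.I / ((n + 1 : ℕ) : ℂ)) ^ (k + 1)‖
        = 2 * Real.sin (π * (k + 1) / (n + 1)) := by
    intro k hk
    rw [← Complex.exp_nat_mul]
    have hne : ((n : ℂ) + 1) ≠ 0 := Nat.cast_add_one_ne_zero n
    have harg : ((k + 1 : ℕ) : ℂ) * (2 * π * Complex.I / ((n + 1 : ℕ) : ℂ))
        = ((2 * π * (k + 1) / (n + 1) : ℝ) : ℂ) * Complex.I := by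
      push_cast
      field_simp
    rw [harg, abs_one_sub_exp]
    have h2 : 2 * π * ((k : ℝ) + 1) / ((n : ℝ) + 1) / 2 = π * (k + 1) / (n + 1) := by ring
    rw [h2, abs_of_nonneg]
    apply Real.sin_nonneg_of_nonneg_of_le_pi
    · positivity
    · rw [div_le_iff₀ (by positivity)]
      have hkn : (k : ℝ) + 1 ≤ (n : ℝ) + 1 := by
        have hk' := (Finset.mem_range.mp hk).le
        have : (k : ℝ) ≤ (n : ℝ) := Nat.cast_le.mpr hk'
        linarith
      nlinarith [Real.pi_pos]
  rw [Finset.prod_congr rfl hterm] at habs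
  have habs' : ‖(n : ℂ) + 1‖ = (n : ℝ) + 1 := by
    rw [show ((n : ℂ) + 1) = ((n + 1 : ℝ) : ℂ) by push_cast; ring, Complex.norm_real, Real.norm_eq_abs]
    rw [abs_of_nonneg (by positivity)]
  rw [habs'] at habs
  rw [show n + 1 - 1 = n from rfl, show Finset.Icc 1 n = Finset.Ico 1 (n + 1) by rw [Finset.Ico_add_one_right_eq_Icc],
    Finset.prod_Ico_eq_prod_range]
  push_cast
  have heq : ∀ x ∈ Finset.range n, 2 * Real.sin (π * (1 + (x : ℝ)) / ((n : ℝ) + 1))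
      = 2 * Real.sin (π * ((x : ℝ) + 1) / ((n : ℝ) + 1)) := by
    intro x _; ring_nf
  rw [Finset.prod_congr rfl heq, habs]

lemma reflect' (N a b : ℕ) (hab : a + b + 1 = N) :
    ∏ j ∈ Finset.Ioc 0 a, (2 * Real.sin (π * j / N))
      = ∏ j ∈ Finset.Ioc b (a + b), (2 * Real.sin (π * j / N)) := by
  apply Finset.prod_nbij' (fun j => N - j) (fun j => N - j)
  · intro j hj; simp only [Finset.mem_Ioc] at *; omega
  · intro j hj; simp only [Finset.mem_Ioc] at *; omega
  · intro j hj; simp only [Finset.mem_Ioc] at hj; omega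
  · intro j hj; simp only [Finset.mem_Ioc] at hj; omega
  · intro j hj
    simp only [Finset.mem_Ioc] at hj
    have hjN : j ≤ N := by omega
    have hNpos : (0:ℝ) < N := by
      have : 0 < N := by omega
      exact_mod_cast this
    have hcast : ((N - j : ℕ) : ℝ) = (N : ℝ) - j := by
      push_cast [Nat.cast_sub hjN]; ring
    rw [hcast]
    have harg : π * ((N : ℝ) - j) / N = π - π * j / N := by
      field_simp
    rw [harg, Real.sin_pi_sub]

lemma reflect (N a b : ℕ) (hab : a + b + 1 = N) :
    (∏ j ∈ Finset.Icc 1 a, (2 * Real.sin (π * j / N)))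
      * ∏ j ∈ Finset.Icc 1 b, (2 * Real.sin (π * j / N))
      = ∏ j ∈ Finset.Icc 1 (N - 1), (2 * Real.sin (π * j / N)) := by
  have hN1 : N - 1 = a + b := by omega
  have hsplit : ∀ x : ℕ, Finset.Icc 1 x = Finset.Ioc 0 x := by
    intro x; ext y; simp [Nat.lt_iff_add_one_le]
  rw [hN1, hsplit, hsplit, hsplit, reflect' N a b hab, mul_comm]
  exact Finset.prod_Ioc_consecutive _ (Nat.zero_le b) (Nat.le_add_left b a)

theorem stmt_2 (N : ℕ) (hN : 3 ≤ N) (hodd : Odd N) (k : ℤ) (hk : |k| ≤ (N : ℤ) / 2) :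
    S N ((N : ℤ) / 2 - k) * S N ((N : ℤ) / 2 + k) = N := by
  obtain ⟨habs1, habs2⟩ := abs_le.mp hk
  set a := ((N : ℤ) / 2 - k).toNat with ha
  set b := ((N : ℤ) / 2 + k).toNat with hb
  have hm : (N : ℤ) % 2 = 1 := by
    obtain ⟨t, rfl⟩ := hodd; push_cast; omega
  have ha' : (a : ℤ) = (N : ℤ) / 2 - k := Int.toNat_of_nonneg (by omega)
  have hb' : (b : ℤ) = (N : ℤ) / 2 + k := Int.toNat_of_nonneg (by omega)
  have hab : a + b + 1 = N := by
    have := Int.mul_ediv_add_emod (N : ℤ) 2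
    omega
  rw [S, S, ← ha, ← hb, reflect N a b hab, prod_two_sin' N (by omega)]
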